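/- A map ε: (X×X)∖Δ → M that assigns no pair the label ⊗ (with every m ∈ M attained by ε) is tree-like if and only if the following two conditions hold: (T1) the sets X_1, …, X_{|M|}, X_⊗ form a quasi-partition of X; and (T3) for all m ∈ M, x ∈ X_m and y ∈ X∖X_m it holds that ε(y,x) = m. -/

import Mathlib

namespace GenFitch

/-- A rooted tree with leaf set `X`: a finite tree (acyclic connected simple
graph) with a distinguished root and an injective embedding of `X` onto the
set of vertices of degree at most one (the leaves). -/
structure RootedTree (X : Type) where
  V : Type
  fintypeV : Fintype V
  G : SimpleGraph V
  isTree : G.IsTree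
  root : V
  leaf : X → V
  leaf_inj : Function.Injective leaf
  leaf_iff : ∀ v : V, (∃ x : X, leaf x = v) ↔ (G.neighborSet v).ncard ≤ 1

namespace RootedTree

variable {X : Type}

/-- Degree of a vertex. -/
noncomputable def deg (T : RootedTree X) (v : T.V) : ℕ := (T.G.neighborSet v).ncard

/-- `v` is a leaf. -/
def IsLeaf (T : RootedTree X) (v : T.V) : Prop := ∃ x : X, T.leaf x = v

/-- `T` is phylogenetic: the root is an inner vertex of degree at least 2 and
every other inner vertex has degree at least 3. -/
def Phylo (T : RootedTree X) : Prop :=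
  ¬ T.IsLeaf T.root ∧ 2 ≤ T.deg T.root ∧
    ∀ v : T.V, ¬ T.IsLeaf v → v ≠ T.root → 3 ≤ T.deg v

/-- `T` is binary: the root has degree exactly 2 and every other inner vertex
has degree exactly 3. -/
def Binary (T : RootedTree X) : Prop :=
  T.deg T.root = 2 ∧ ∀ v : T.V, ¬ T.IsLeaf v → v ≠ T.root → T.deg v = 3

/-- `u` is an ancestor of `v` (written `u ⪰_T v`): `u` lies on the (unique)
path from the root to `v`. -/
def Anc (T : RootedTree X) (u v : T.V) : Prop :=
  ∀ p : T.G.Walk T.root v, p.IsPath → u ∈ p.support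

/-- `l` is the least common ancestor of the set of vertices `S`. -/
def IsLcaSet (T : RootedTree X) (l : T.V) (S : Set T.V) : Prop :=
  (∀ v ∈ S, T.Anc l v) ∧ ∀ u : T.V, (∀ v ∈ S, T.Anc u v) → T.Anc u l

/-- `T` displays the rooted triple `xy|z`, i.e. `lca(x,y) ≺ lca(x,y,z)`. -/
def Displays (T : RootedTree X) (x y z : X) : Prop :=
  ∃ l₂ l₃ : T.V, T.IsLcaSet l₂ {T.leaf x, T.leaf y} ∧
    T.IsLcaSet l₃ {T.leaf x, T.leaf y, T.leaf z} ∧ T.Anc l₃ l₂ ∧ l₂ ≠ l₃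

end RootedTree

/-- Some edge on the (unique) path from `lca(x,y)` to `y` carries the label
`m`.  Labels are drawn from `Option L`, with `none` playing the role of `⊗`. -/
def PathHasLabel {X L : Type} (T : RootedTree X) (lam : Sym2 T.V → Option L)
    (x y : X) (m : L) : Prop :=
  ∃ l : T.V, T.IsLcaSet l {T.leaf x, T.leaf y} ∧
    ∃ p : T.G.Walk l (T.leaf y), p.IsPath ∧ ∃ e ∈ p.edges, lam e = some m

/-- The edge-labeled tree `(T,lam)` explains the map `eps`:
for all distinct `x y`, `eps x y = some m` iff some edge on the path from
`lca(x,y)` to `y` has label `m`, and `eps x y = none` (i.e. `⊗`) iff no edge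
on that path carries a label in `L`. -/
def Explains {X L : Type} (T : RootedTree X) (lam : Sym2 T.V → Option L)
    (eps : X → X → Option L) : Prop :=
  ∀ x y : X, x ≠ y →
    ((∀ m : L, eps x y = some m ↔ PathHasLabel T lam x y m) ∧
     (eps x y = none ↔ ∀ m : L, ¬ PathHasLabel T lam x y m))

/-- `eps` is tree-like: some edge-labeled phylogenetic tree explains it. -/
def TreeLike {X L : Type} (eps : X → X → Option L) : Prop :=
  ∃ (T : RootedTree X) (lam : Sym2 T.V → Option L), T.Phylo ∧ Explains T lam eps

/-- The set `X_s` for a symbol `s ∈ M ∪ {⊗}` (encoded as `s : Option M`):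
those `x` having an in-arc labeled `s` and all other in-arcs labeled `⊗` or `s`. -/
def Xset {X M : Type} (eps : X → X → Option M) (s : Option M) : Set X :=
  {x : X | ∃ z : X, z ≠ x ∧ eps z x = s ∧
    ∀ z' : X, z' ≠ z → z' ≠ x → (eps z' x = none ∨ eps z' x = s)}

/-- The sets `X_s`, `s ∈ M ∪ {⊗}`, form a quasi-partition of `X`: pairwise
disjoint, union `X`, and at most one of them empty. -/
def QuasiPartition {X M : Type} (eps : X → X → Option M) : Prop :=
  (∀ s t : Option M, s ≠ t → Disjoint (Xset eps s) (Xset eps t)) ∧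
  (⋃ s : Option M, Xset eps s) = Set.univ ∧
  {s : Option M | Xset eps s = ∅}.Subsingleton

/-- A digraph `(Y, A)` is a simple Fitch graph: it is explained by a
`{1,⊗}`-edge-labeled phylogenetic tree on `Y` (a digraph on at most one
vertex is trivially explained by the trivial tree). -/
def IsFitchGraph (Y : Type) (A : Y → Y → Prop) : Prop :=
  Subsingleton Y ∨
  ∃ (T : RootedTree Y) (lam : Sym2 T.V → Option Unit), T.Phylo ∧
    ∀ x y : Y, x ≠ y → (A x y ↔ PathHasLabel T lam x y Unit.unit)

/-- `T'` is obtained from `T` by contracting (the fibers of) `φ`; equivalently,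
`T` refines `T'`. -/
structure IsContractionMap {X : Type} (T T' : RootedTree X) (φ : T.V → T'.V) :
    Prop where
  surj : Function.Surjective φ
  root_map : φ T.root = T'.root
  leaf_map : ∀ x : X, φ (T.leaf x) = T'.leaf x
  adj_map : ∀ a b : T.V, T.G.Adj a b → φ a = φ b ∨ T'.G.Adj (φ a) (φ b)
  adj_lift : ∀ u v : T'.V, T'.G.Adj u v →
    ∃ a b : T.V, T.G.Adj a b ∧ φ a = u ∧ φ b = v
  fiber_conn : ∀ u : T'.V, (T.G.induce {a : T.V | φ a = u}).Connected

/-- `(T,lam)` is a least-resolved tree explaining `eps`: it explains `eps` and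
no tree obtained from `T` by contracting one or more edges admits an
edge-labeling explaining `eps`. -/
def LeastResolved {X M : Type} (eps : X → X → Option M) (T : RootedTree X)
    (lam : Sym2 T.V → Option M) : Prop :=
  T.Phylo ∧ Explains T lam eps ∧
    ∀ (T' : RootedTree X) (φ : T.V → T'.V) (lam' : Sym2 T'.V → Option M),
      IsContractionMap T T' φ → ¬ Function.Injective φ → T'.Phylo →
        ¬ Explains T' lam' eps

/-- The rooted triple `xy|z` is informative for `eps`. -/
def Informative {X M : Type} (eps : X → X → Option M) (x y z : X) : Prop :=
  x ≠ y ∧ x ≠ z ∧ y ≠ z ∧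
  ∃ m : M, eps z x = some m ∧ eps z y = some m ∧ eps x z = eps y z ∧
    (eps x y = none ∨ eps x y = some m) ∧
    (eps y x = none ∨ eps y x = some m) ∧
    (eps x y = none ∨ eps y x = none)

/-- `T'` (a rooted tree on `Y`, with `incl : Y → X` and vertex embedding `ι`)
is the restriction `T|Y` of `T` to the leaf set `Y`: leaves map to leaves,
the ancestor relation is preserved and reflected, the vertices of `T'`
correspond exactly to the least common ancestors of pairs of `Y`-leaves in
`T`, and the root of `T'` corresponds to the least common ancestor of all
`Y`-leaves. -/
structure IsRestriction {X Y : Type} (T : RootedTree X) (incl : Y → X)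
    (T' : RootedTree Y) (ι : T'.V → T.V) : Prop where
  inj : Function.Injective ι
  leaf_map : ∀ y : Y, ι (T'.leaf y) = T.leaf (incl y)
  anc_iff : ∀ a b : T'.V, T'.Anc a b ↔ T.Anc (ι a) (ι b)
  image : ∀ v : T.V, (∃ a : T'.V, ι a = v) ↔
      ∃ y z : Y, T.IsLcaSet v {T.leaf (incl y), T.leaf (incl z)}
  root_map : T.IsLcaSet (ι T'.root) {v : T.V | ∃ y : Y, v = T.leaf (incl y)}

open SimpleGraph

@[reducible] def starGraph (X : Type) : SimpleGraph (Option X) where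
  Adj a b := a ≠ b ∧ (a = none ∨ b = none)
  symm := ⟨by rintro a b ⟨h1, h2⟩; exact ⟨h1.symm, h2.symm⟩⟩
  loopless := ⟨fun a h => h.1 rfl⟩

variable {X : Type}

lemma star_adj_none_some (y : X) : (starGraph X).Adj none (some y) :=
  ⟨by simp, Or.inl rfl⟩

lemma star_walk_none_none (p : (starGraph X).Walk none none) (hp : p.IsPath) :
    p = .nil := (SimpleGraph.Walk.isPath_iff_eq_nil (p := p)).mp hp

lemma star_walk_none_some {y : X} (p : (starGraph X).Walk none (some y))
    (hp : p.IsPath) : p = .cons (star_adj_none_some y) .nil := by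
  cases p with
  | cons h q =>
    rename_i w
    have hw : w = some y := by
      obtain ⟨h1, h2⟩ := h
      rcases h2 with h2 | h2
      · cases q with
        | nil => rfl
        | cons h' q' =>
          rename_i w2
          exfalso
          obtain ⟨h1', h2'⟩ := h'
          rcases h2' with h2' | h2'
          · exact h1 h2'.symm
          · subst h2'
            have := hp.support_nodup
            simp [Walk.support_cons] at this
      · exact absurd h2.symm h1
    subst hw
    have hq : q = .nil := by
      cases q with
      | nil => rfl
      | cons h' q' =>
        exfalso
        obtain ⟨h1', h2'⟩ := h'
        rcases h2' with h2' | h2'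
        · cases h2'
        · subst h2'
          have := hp.support_nodup
          simp [Walk.support_cons] at this
    subst hq
    rfl

lemma star_walk_some_none {x : X} (p : (starGraph X).Walk (some x) none)
    (hp : p.IsPath) :
    p = .cons (star_adj_none_some x).symm .nil := by
  cases p with
  | cons h q =>
    rename_i w
    have hw : w = none := by
      obtain ⟨h1, h2⟩ := h
      rcases h2 with h2 | h2
      · cases h2
      · exact h2
    subst hw
    have hq : q = .nil := star_walk_none_none q hp.of_cons
    subst hq
    rfl

lemma star_walk_some_some {x y : X} (hxy : x ≠ y)
    (p : (starGraph X).Walk (some x) (some y)) (hp : p.IsPath) :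
    p = .cons (star_adj_none_some x).symm (.cons (star_adj_none_some y) .nil) := by
  cases p with
  | nil => exact absurd rfl hxy
  | cons h q =>
    rename_i w
    have hw : w = none := by
      obtain ⟨h1, h2⟩ := h
      rcases h2 with h2 | h2
      · cases h2
      · exact h2
    subst hw
    have hq := star_walk_none_some q hp.of_cons
    subst hq
    rfl

lemma star_isTree : (starGraph X).IsTree := by
  constructor
  · refine ⟨fun u v => ?_⟩
    have key : ∀ w : Option X, (starGraph X).Reachable none w := by
      intro w
      cases w with
      | none => rfl
      | some y => exact (star_adj_none_some y).reachable
    exact ((key u).symm.trans (key v))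
  · apply isAcyclic_of_path_unique
    intro v w p q
    cases v with
    | none =>
      cases w with
      | none =>
        ext1
        rw [star_walk_none_none p.1 p.2, star_walk_none_none q.1 q.2]
      | some y =>
        ext1
        rw [star_walk_none_some p.1 p.2, star_walk_none_some q.1 q.2]
    | some x =>
      cases w with
      | none =>
        ext1
        rw [star_walk_some_none p.1 p.2, star_walk_some_none q.1 q.2]
      | some y =>
        by_cases hxy : x = y
        · subst hxy
          ext1
          rw [(Walk.isPath_iff_eq_nil (p := p.1)).mp p.2, (Walk.isPath_iff_eq_nil (p := q.1)).mp q.2]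
        · ext1
          rw [star_walk_some_some hxy p.1 p.2, star_walk_some_some hxy q.1 q.2]

lemma star_neighborSet_some (x : X) :
    (starGraph X).neighborSet (some x) = {none} := by
  ext b
  simp only [mem_neighborSet, Set.mem_singleton_iff]
  constructor
  · rintro ⟨h1, h2 | h2⟩
    · cases h2
    · exact h2
  · rintro rfl
    exact ⟨by simp, Or.inr rfl⟩

lemma star_neighborSet_none :
    (starGraph X).neighborSet (none : Option X) = Set.range some := by
  ext b
  simp only [mem_neighborSet, Set.mem_range]
  constructor
  · rintro ⟨h1, _⟩
    cases b with
    | none => exact absurd rfl h1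
    | some y => exact ⟨y, rfl⟩
  · rintro ⟨y, rfl⟩
    exact ⟨by simp, Or.inl trivial⟩

/-- The star rooted tree on `X`. -/
noncomputable def starTree (X : Type) [Fintype X] (hX : 1 < Fintype.card X) :
    RootedTree X where
  V := Option X
  fintypeV := inferInstance
  G := starGraph X
  isTree := star_isTree
  root := none
  leaf := some
  leaf_inj := fun _ _ h => Option.some_injective X h
  leaf_iff := by
    intro v
    cases v with
    | none =>
      simp only [star_neighborSet_none]
      constructor
      · rintro ⟨x, h⟩; cases h
      · intro h
        exfalso
        have : (Set.range (some : X → Option X)).ncard = Fintype.card X := by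
          rw [← Set.image_univ, Set.ncard_image_of_injective _ (Option.some_injective X),
            Set.ncard_univ, Nat.card_eq_fintype_card]
        omega
    | some x =>
      simp only [star_neighborSet_some, Set.ncard_singleton]
      exact iff_of_true ⟨x, rfl⟩ le_rfl

variable [Fintype X] (hX : 1 < Fintype.card X)

lemma starTree_phylo : (starTree X hX).Phylo := by
  refine ⟨?_, ?_, ?_⟩
  · rintro ⟨x, h⟩; cases h
  · show 2 ≤ ((starGraph X).neighborSet none).ncard
    rw [star_neighborSet_none, ← Set.image_univ,
      Set.ncard_image_of_injective _ (Option.some_injective X),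
      Set.ncard_univ, Nat.card_eq_fintype_card]
    omega
  · intro v hv hvr
    exfalso
    cases v with
    | none => exact hvr rfl
    | some x => exact hv ⟨x, rfl⟩

lemma star_single_path (y : X) :
    ((Walk.cons (star_adj_none_some y) .nil) : (starGraph X).Walk none (some y)).IsPath := by
  simp [Walk.isPath_def]

lemma starTree_anc_leaf {u : Option X} {x : X}
    (h : (starTree X hX).Anc u (some x)) : u = none ∨ u = some x := by
  have := h (.cons (star_adj_none_some x) .nil) (star_single_path x)
  rcases List.mem_cons.mp this with h | h
  · exact Or.inl h
  · exact Or.inr (List.mem_singleton.mp h)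

lemma starTree_lca {x y : X} (hxy : x ≠ y) {l : Option X}
    (h : (starTree X hX).IsLcaSet l {(starTree X hX).leaf x, (starTree X hX).leaf y}) :
    l = none := by
  have hx := starTree_anc_leaf hX (h.1 (some x) (Or.inl rfl))
  have hy := starTree_anc_leaf hX (h.1 (some y) (Or.inr rfl))
  rcases hx with hx | hx
  · exact hx
  · rcases hy with hy | hy
    · exact hy
    · exact absurd (hx ▸ hy ▸ rfl : (some x : Option X) = some y)
        (by simpa using hxy)

lemma starTree_isLca {x y : X} (hxy : x ≠ y) :
    (starTree X hX).IsLcaSet none {(starTree X hX).leaf x, (starTree X hX).leaf y} := by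
  constructor
  · intro v _ p _
    exact p.start_mem_support
  · intro u hu p hp
    have := star_walk_none_none p hp
    subst this
    have hx := starTree_anc_leaf hX (hu (some x) (Or.inl rfl))
    have hy := starTree_anc_leaf hX (hu (some y) (Or.inr rfl))
    have hu0 : u = none := by
      rcases hx with hx | hx
      · exact hx
      · rcases hy with hy | hy
        · exact hy
        · exact absurd (hx ▸ hy ▸ rfl : (some x : Option X) = some y) (by simpa using hxy)
    subst hu0
    exact Walk.start_mem_support _


section Lam
variable {M : Type}

noncomputable def starLam (lab : X → Option M) : Sym2 (Option X) → Option M :=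
  Sym2.lift ⟨fun a b => match a, b with
    | some x, none => lab x
    | none, some x => lab x
    | _, _ => none, by
      intro a b
      cases a <;> cases b <;> rfl⟩

lemma starLam_eq (lab : X → Option M) (y : X) :
    starLam lab s(none, some y) = lab y := rfl

lemma starTree_pathHasLabel (lab : X → Option M) {x y : X} (hxy : x ≠ y) (m : M) :
    PathHasLabel (starTree X hX) (starLam lab) x y m ↔ lab y = some m := by
  constructor
  · rintro ⟨l, hlca, p, hp, e, he, hlab⟩
    have hl : l = none := starTree_lca hX hxy hlca
    subst hl
    have hpe := star_walk_none_some p hp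
    subst hpe
    have he' := List.mem_singleton.mp he
    subst he'
    exact hlab
  · intro hm
    refine ⟨none, starTree_isLca hX hxy, .cons (star_adj_none_some y) .nil,
      star_single_path y, s(none, some y), List.mem_singleton.mpr rfl, ?_⟩
    exact hm

include hX in
lemma treeLike_of_key (eps : X → X → Option M)
    (hnone : ∀ x y : X, x ≠ y → eps x y ≠ none)
    (hK : ∀ x z z' : X, z ≠ x → z' ≠ x → eps z x = eps z' x) :
    TreeLike eps := by
  have hnt : Nontrivial X := Fintype.one_lt_card_iff_nontrivial.mp hX
  set lab : X → Option M := fun x => eps (Classical.choose (exists_ne x)) x with hlab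
  have hlab_spec : ∀ x z : X, z ≠ x → eps z x = lab x := by
    intro x z hz
    exact hK x z _ hz (Classical.choose_spec (exists_ne x))
  have hlab_some : ∀ x : X, ∃ m : M, lab x = some m := by
    intro x
    cases h : lab x with
    | none =>
      exact absurd (h ▸ rfl) (hnone _ x (Classical.choose_spec (exists_ne x)))
    | some m => exact ⟨m, rfl⟩
  refine ⟨starTree X hX, starLam lab, starTree_phylo hX, ?_⟩
  intro x y hxy
  have hexy : eps x y = lab y := hlab_spec y x hxy
  constructor
  · intro m
    rw [starTree_pathHasLabel hX lab hxy m, hexy]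
  · constructor
    · intro h
      exact absurd h (hnone x y hxy)
    · intro h
      obtain ⟨m, hm⟩ := hlab_some y
      exact absurd ((starTree_pathHasLabel hX lab hxy m).mpr hm) (h m)

end Lam

lemma key_of_treeLike {X M : Type} (eps : X → X → Option M)
    (hnone : ∀ x y : X, x ≠ y → eps x y ≠ none) (hT : TreeLike eps) :
    ∀ x z z' : X, z ≠ x → z' ≠ x → eps z x = eps z' x := by
  classical
  obtain ⟨T, lam, hphy, hexp⟩ := hT
  intro x z z' hz hz'
  obtain ⟨m, h1⟩ : ∃ m, eps z x = some m := by
    cases h : eps z x with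
    | none => exact absurd h (hnone z x hz)
    | some m => exact ⟨m, rfl⟩
  obtain ⟨m', h2⟩ : ∃ m', eps z' x = some m' := by
    cases h : eps z' x with
    | none => exact absurd h (hnone z' x hz')
    | some m => exact ⟨m, rfl⟩
  obtain ⟨l, hlca, p, hp, e, he, hlabe⟩ := ((hexp z x hz).1 m).mp h1
  obtain ⟨l', hlca', p', hp', e', he', hlabe'⟩ := ((hexp z' x hz').1 m').mp h2
  -- a path from the root to leaf x
  obtain ⟨hne, huniq⟩ := (SimpleGraph.isTree_iff_existsUnique_path).mp T.isTree
  obtain ⟨r, hr, hru⟩ := huniq T.root (T.leaf x)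
  have hl : l ∈ r.support := hlca.1 (T.leaf x) (by simp) r hr
  have hl' : l' ∈ r.support := hlca'.1 (T.leaf x) (by simp) r hr
  obtain ⟨q, w, hqw⟩ := SimpleGraph.Walk.mem_support_iff_exists_append.mp hl
  rw [hqw] at hr hl'
  have hw : w.IsPath := hr.of_append_right
  rw [SimpleGraph.Walk.support_append] at hl'
  have key : eps z x = some m' ∨ eps z' x = some m := by
    rcases List.mem_append.mp hl' with h3 | h3
    · -- l' is in q : Walk root l ; build walk from l' to leaf x through l
      obtain ⟨q1, q2, hq12⟩ := SimpleGraph.Walk.mem_support_iff_exists_append.mp h3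
      rw [hq12, ← SimpleGraph.Walk.append_assoc] at hr
      have hw' : (q2.append w).IsPath := hr.of_append_right
      have hlw' : l ∈ (q2.append w).support := by
        rw [SimpleGraph.Walk.support_append]
        exact List.mem_append_left _ q2.end_mem_support
      have hpu : p = (q2.append w).dropUntil l hlw' := by
        have := T.isTree.2.path_unique ⟨p, hp⟩
          ⟨(q2.append w).dropUntil l hlw', hw'.dropUntil hlw'⟩
        exact Subtype.ext_iff.mp this
      have hew' : e ∈ (q2.append w).edges :=
        SimpleGraph.Walk.edges_dropUntil_subset _ hlw' (hpu ▸ he)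
      exact Or.inr (((hexp z' x hz').1 m).mpr
        ⟨l', hlca', q2.append w, hw', e, hew', hlabe⟩)
    · -- l' is in w : Walk l (leaf x)
      have h4 : l' ∈ w.support := List.mem_of_mem_tail h3
      have hp'u : p' = w.dropUntil l' h4 := by
        have := T.isTree.2.path_unique ⟨p', hp'⟩
          ⟨w.dropUntil l' h4, hw.dropUntil h4⟩
        exact Subtype.ext_iff.mp this
      have hew : e' ∈ w.edges :=
        SimpleGraph.Walk.edges_dropUntil_subset _ h4 (hp'u ▸ he')
      exact Or.inl (((hexp z x hz).1 m').mpr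
        ⟨l, hlca, w, hw, e', hew, hlabe'⟩)
  rcases key with h | h
  · rw [h1] at h
    rw [h1, h2, Option.some_inj.mp h]
  · rw [h2] at h
    rw [h1, h2, Option.some_inj.mp h]

theorem stmt6 {X M : Type} [Fintype X] [Fintype M] [Nonempty M]
    (hX : 1 < Fintype.card X)
    (eps : X → X → Option M)
    (hattain : ∀ m : M, ∃ x y : X, x ≠ y ∧ eps x y = some m)
    (hnone : ∀ x y : X, x ≠ y → eps x y ≠ none) :
    TreeLike eps ↔
      QuasiPartition eps ∧
      (∀ (m : M) (x y : X), x ∈ Xset eps (some m) → y ∉ Xset eps (some m) →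
          y ≠ x → eps y x = some m) := by
  have hnt : Nontrivial X := Fintype.one_lt_card_iff_nontrivial.mp hX
  constructor
  · intro hT
    have hK := key_of_treeLike eps hnone hT
    constructor
    · refine ⟨?_, ?_, ?_⟩
      · intro s t hst
        rw [Set.disjoint_left]
        rintro a ⟨z, hz, hzs, -⟩ ⟨z', hz', hzt, -⟩
        exact hst (by rw [← hzs, ← hzt]; exact hK a z z' hz hz')
      · ext a
        simp only [Set.mem_iUnion, Set.mem_univ, iff_true]
        obtain ⟨z, hz⟩ := exists_ne a
        refine ⟨eps z a, z, hz, rfl, fun z' _ hz2 => Or.inr (hK a z' z hz2 hz)⟩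
      · have hne : ∀ m : M, Xset eps (some m) ≠ ∅ := by
          intro m h
          obtain ⟨u, v, huv, he⟩ := hattain m
          have hv : v ∈ Xset eps (some m) :=
            ⟨u, huv, he, fun z' _ hzv => Or.inr ((hK v z' u hzv huv).trans he)⟩
          rw [h] at hv
          exact hv
        intro s hs t ht
        have h1 : s = none := by
          cases s with
          | none => rfl
          | some m => exact absurd hs (hne m)
        have h2 : t = none := by
          cases t with
          | none => rfl
          | some m => exact absurd ht (hne m)
        rw [h1, h2]
    · rintro m x y ⟨z, hz, hzm, -⟩ - hyx
      exact (hK x y z hyx hz).trans hzm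
  · rintro ⟨hqp, -⟩
    apply treeLike_of_key hX eps hnone
    intro x z z' hz hz'
    have hx : x ∈ ⋃ s, Xset eps s := hqp.2.1 ▸ Set.mem_univ x
    obtain ⟨s, hs⟩ := Set.mem_iUnion.mp hx
    obtain ⟨z₀, hz₀, he₀, hall⟩ := hs
    have form : ∀ w : X, w ≠ x → eps w x = s := by
      intro w hw
      by_cases hwz : w = z₀
      · subst hwz; exact he₀
      · rcases hall w hwz hw with h | h
        · exact absurd h (hnone w x hw)
        · exact h
    rw [form z hz, form z' hz']

end GenFitch
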